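/- Let ν be an admissible profile with α_min := inf{α : ν(α) ≥ 0} finite, and let ν' be its dual profile with α'_min := inf{α' : ν'(α') ≥ 0}. Then α'_min = -α_min. -/

import Mathlib

noncomputable section
open Filter Set Topology

/-- Clamp an extended real into `{-∞} ∪ [0,1]`. -/
def clamp (b : EReal) : EReal := if b < 0 then ⊥ else min b 1

/-- The dual profile `ν'(α') = ⌊⌊ α' + inf{α : ν(α) - α > α'} ⌋⌋` (with `inf ∅ = +∞`). -/
def dualProfile (ν : ℝ → EReal) (a' : ℝ) : EReal :=
  clamp ((a' : EReal) +
    sInf ((fun a : ℝ => (a : EReal)) '' {a : ℝ | (a' : EReal) < ν a - (a : EReal)}))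

lemma clamp_nonneg_iff (b : EReal) : 0 ≤ clamp b ↔ 0 ≤ b := by
  unfold clamp
  split_ifs with h
  · simp [not_le.mpr h]
  · simp [le_min_iff, not_lt.mp h]

theorem stmt9 (ν : ℝ → EReal)
    (hmono : Monotone ν)
    (hrc : ∀ a : ℝ, ContinuousWithinAt ν (Set.Ici a) a)
    (hval : ∀ a : ℝ, ν a = ⊥ ∨ (0 ≤ ν a ∧ ν a ≤ 1))
    (hne : ∃ a : ℝ, ν a ≠ ⊥)
    (hfin : ∃ m : ℝ, sInf ((fun a : ℝ => (a : EReal)) '' {a : ℝ | 0 ≤ ν a}) = (m : EReal)) :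
    sInf ((fun a : ℝ => (a : EReal)) '' {a' : ℝ | 0 ≤ dualProfile ν a'}) =
      -sInf ((fun a : ℝ => (a : EReal)) '' {a : ℝ | 0 ≤ ν a}) := by
  obtain ⟨m, hm⟩ := hfin
  -- m is a lower bound of {a | 0 ≤ ν a}
  have hA_lb : ∀ a : ℝ, 0 ≤ ν a → m ≤ a := by
    intro a ha
    have h1 : sInf ((fun a : ℝ => (a : EReal)) '' {a : ℝ | 0 ≤ ν a}) ≤ (a : EReal) :=
      sInf_le ⟨a, ha, rfl⟩
    rw [hm] at h1
    exact_mod_cast h1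
  -- everything strictly above m is in {a | 0 ≤ ν a}
  have hA_mem : ∀ a : ℝ, m < a → 0 ≤ ν a := by
    intro a ha
    have h1 : sInf ((fun a : ℝ => (a : EReal)) '' {a : ℝ | 0 ≤ ν a}) < (a : EReal) := by
      rw [hm]; exact_mod_cast ha
    obtain ⟨x, hx, hxa⟩ := sInf_lt_iff.mp h1
    obtain ⟨b, hb, rfl⟩ := hx
    have hba : (b : EReal) < (a : EReal) := hxa
    exact le_trans hb (hmono (le_of_lt (by exact_mod_cast hba)))
  -- -m belongs to the dual set
  have hmemT : 0 ≤ dualProfile ν (-m) := by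
    rw [dualProfile, clamp_nonneg_iff]
    have hS : (m : EReal) ≤
        sInf ((fun a : ℝ => (a : EReal)) '' {a : ℝ | ((-m : ℝ) : EReal) < ν a - (a : EReal)}) := by
      apply le_sInf
      rintro x ⟨a, ha, rfl⟩
      have hbot : ν a ≠ ⊥ := by
        intro hb
        rw [Set.mem_setOf_eq, hb, EReal.bot_sub] at ha
        exact not_lt_bot ha
      have h0 : 0 ≤ ν a := ((hval a).resolve_left hbot).1
      show (m : EReal) ≤ (a : EReal)
      exact_mod_cast hA_lb a h0
    calc (0 : EReal) = ((-m : ℝ) : EReal) + (m : EReal) := by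
          rw [← EReal.coe_add]; norm_num
      _ ≤ ((-m : ℝ) : EReal) + _ := add_le_add_right hS _
  -- -m is a lower bound of the dual set
  have hlb : ∀ a' : ℝ, 0 ≤ dualProfile ν a' → -m ≤ a' := by
    intro a' h
    by_contra hcon
    push_neg at hcon
    set a : ℝ := (m + -a') / 2 with ha_def
    have h1 : m < a := by rw [ha_def]; linarith
    have h2 : a < -a' := by rw [ha_def]; linarith
    have hνa : 0 ≤ ν a := hA_mem a h1
    have hmemS : ((a' : ℝ) : EReal) < ν a - (a : EReal) := by
      have hle : ((-a : ℝ) : EReal) ≤ ν a - (a : EReal) := by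
        have : (0 : EReal) - (a : EReal) ≤ ν a - (a : EReal) :=
          EReal.sub_le_sub hνa le_rfl
        simpa using this
      have hlt : ((a' : ℝ) : EReal) < ((-a : ℝ) : EReal) := by
        exact_mod_cast (by linarith : a' < -a)
      exact lt_of_lt_of_le hlt hle
    have hinf : sInf ((fun a : ℝ => (a : EReal)) '' {a : ℝ | ((a' : ℝ) : EReal) < ν a - (a : EReal)})
        ≤ (a : EReal) := sInf_le ⟨a, hmemS, rfl⟩
    have hsum : (a' : EReal) +
        sInf ((fun a : ℝ => (a : EReal)) '' {a : ℝ | ((a' : ℝ) : EReal) < ν a - (a : EReal)})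
        < 0 := by
      calc (a' : EReal) + _ ≤ (a' : EReal) + (a : EReal) := add_le_add_right hinf _
        _ = ((a' + a : ℝ) : EReal) := by rw [EReal.coe_add]
        _ < 0 := by exact_mod_cast (by linarith : a' + a < 0)
    rw [dualProfile, clamp_nonneg_iff] at h
    exact absurd h (not_le.mpr hsum)
  -- conclude
  have hT : sInf ((fun a : ℝ => (a : EReal)) '' {a' : ℝ | 0 ≤ dualProfile ν a'})
      = ((-m : ℝ) : EReal) := by
    apply le_antisymm
    · exact sInf_le ⟨-m, hmemT, rfl⟩
    · apply le_sInf
      rintro x ⟨a', h, rfl⟩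
      show ((-m : ℝ) : EReal) ≤ (a' : EReal)
      exact_mod_cast hlb a' h
  rw [hT, hm, ← EReal.coe_neg]
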